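/- Suppose there is an anchor state s₀ such that Opt(s) = Opt(s₀) for every state s agreeing with s₀ on I, and the anchor fiber contains a positive-probability state, i.e., there exists t agreeing with s₀ on I with P(t) > 0. Then OptS_I(s) = Opt(s) for every state s agreeing with s₀ on I; in particular I is stochastically anchor-preserving. -/
import Mathlib


/-- Full-information optimizer: actions maximizing pointwise utility at state `s`. -/
def Opt {n : ℕ} {A : Type*} {X : Fin n → Type*}
    (U : A → (∀ i, X i) → ℝ) (s : ∀ i, X i) : Set A :=
  {a | ∀ b, U b s ≤ U a s}

/-- Conditional (unnormalized) expected utility of action `a` over the `I`-fiber of `s`. -/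
noncomputable def condEU {n : ℕ} {A : Type*} {X : Fin n → Type*}
    [∀ i, Fintype (X i)] [∀ i, DecidableEq (X i)]
    (U : A → (∀ i, X i) → ℝ) (P : (∀ i, X i) → ℝ)
    (I : Finset (Fin n)) (s : ∀ i, X i) (a : A) : ℝ :=
  ∑ t ∈ Finset.univ.filter (fun t : ∀ i, X i => ∀ i ∈ I, t i = s i), P t * U a t

/-- Conditional optimizer: actions maximizing conditional expected utility on the `I`-fiber. -/
noncomputable def OptS {n : ℕ} {A : Type*} {X : Fin n → Type*}
    [∀ i, Fintype (X i)] [∀ i, DecidableEq (X i)]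
    (U : A → (∀ i, X i) → ℝ) (P : (∀ i, X i) → ℝ)
    (I : Finset (Fin n)) (s : ∀ i, X i) : Set A :=
  {a | ∀ b, condEU U P I s b ≤ condEU U P I s a}

/-- `I` is statically sufficient: states agreeing on `I` have the same optimizer. -/
def StaticSufficient {n : ℕ} {A : Type*} {X : Fin n → Type*}
    (U : A → (∀ i, X i) → ℝ) (I : Finset (Fin n)) : Prop :=
  ∀ s t : ∀ i, X i, (∀ i ∈ I, s i = t i) → Opt U s = Opt U t

/-- `I` is stochastically sufficient: the conditional optimizer agrees with the
full-information optimizer at every state. -/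
def StochSufficient {n : ℕ} {A : Type*} {X : Fin n → Type*}
    [∀ i, Fintype (X i)] [∀ i, DecidableEq (X i)]
    (U : A → (∀ i, X i) → ℝ) (P : (∀ i, X i) → ℝ) (I : Finset (Fin n)) : Prop :=
  ∀ s : ∀ i, X i, OptS U P I s = Opt U s

/-- `I` is stochastically decisive: every positive-probability state's observed fiber
has a unique conditional optimal action. -/
def StochDecisive {n : ℕ} {A : Type*} {X : Fin n → Type*}
    [∀ i, Fintype (X i)] [∀ i, DecidableEq (X i)]
    (U : A → (∀ i, X i) → ℝ) (P : (∀ i, X i) → ℝ) (I : Finset (Fin n)) : Prop :=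
  ∀ s : ∀ i, X i, 0 < P s → ∃ a : A, OptS U P I s = {a}

theorem static_anchor_positive_fiber_implies_stochastic_anchor
    {n : ℕ} {A : Type*} {X : Fin n → Type*}
    [Fintype A] [Nonempty A] [∀ i, Fintype (X i)] [∀ i, Nonempty (X i)]
    [∀ i, DecidableEq (X i)]
    (U : A → (∀ i, X i) → ℝ) (P : (∀ i, X i) → ℝ)
    (hP0 : ∀ s, 0 ≤ P s) (hP1 : ∑ s : ∀ i, X i, P s = 1)
    (I : Finset (Fin n)) (s₀ : ∀ i, X i)
    (hanchor : ∀ s : ∀ i, X i, (∀ i ∈ I, s i = s₀ i) → Opt U s = Opt U s₀)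
    (hpos : ∃ t : ∀ i, X i, (∀ i ∈ I, t i = s₀ i) ∧ 0 < P t) :
    (∀ s : ∀ i, X i, (∀ i ∈ I, s i = s₀ i) → OptS U P I s = Opt U s) ∧
      (∃ s₁ : ∀ i, X i, ∀ s : ∀ i, X i,
        (∀ i ∈ I, s i = s₁ i) → OptS U P I s = Opt U s) := by
  obtain ⟨t₀, ht₀I, ht₀P⟩ := hpos
  have main : ∀ s : ∀ i, X i, (∀ i ∈ I, s i = s₀ i) → OptS U P I s = Opt U s := by
    intro s hs
    obtain ⟨aopt, -, haopt⟩ := Finset.exists_max_image (Finset.univ : Finset A)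
      (fun a => U a s₀) ⟨Classical.arbitrary A, Finset.mem_univ _⟩
    have haopt0 : aopt ∈ Opt U s₀ := fun b => haopt b (Finset.mem_univ b)
    have hOpt : Opt U s = Opt U s₀ := hanchor s hs
    have hfib : ∀ t : ∀ i, X i, (∀ i ∈ I, t i = s i) → Opt U t = Opt U s₀ := fun t ht =>
      hanchor t (fun i hi => (ht i hi).trans (hs i hi))
    have hptwise : ∀ t : ∀ i, X i, (∀ i ∈ I, t i = s i) → ∀ b, U b t ≤ U aopt t := by
      intro t ht b
      have h1 : aopt ∈ Opt U t := by rw [hfib t ht]; exact haopt0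
      exact h1 b
    have ht₀s : ∀ i ∈ I, t₀ i = s i := fun i hi => (ht₀I i hi).trans (hs i hi).symm
    have ht₀mem : t₀ ∈ Finset.univ.filter (fun t : ∀ i, X i => ∀ i ∈ I, t i = s i) :=
      Finset.mem_filter.mpr ⟨Finset.mem_univ _, ht₀s⟩
    ext a
    simp only [OptS, Set.mem_setOf_eq]
    constructor
    · intro ha
      have h1 : condEU U P I s aopt ≤ condEU U P I s a := ha aopt
      have h2 : ∀ t ∈ Finset.univ.filter (fun t : ∀ i, X i => ∀ i ∈ I, t i = s i),
          P t * U a t ≤ P t * U aopt t := fun t ht =>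
        mul_le_mul_of_nonneg_left (hptwise t (Finset.mem_filter.mp ht).2 a) (hP0 t)
      have h3 : condEU U P I s a ≤ condEU U P I s aopt := Finset.sum_le_sum h2
      have heq : ∀ t ∈ Finset.univ.filter (fun t : ∀ i, X i => ∀ i ∈ I, t i = s i),
          P t * U a t = P t * U aopt t :=
        (Finset.sum_eq_sum_iff_of_le h2).mp (le_antisymm h3 h1)
      have ht0eq : U a t₀ = U aopt t₀ :=
        mul_left_cancel₀ (ne_of_gt ht₀P) (heq t₀ ht₀mem)
      have haOptt₀ : a ∈ Opt U t₀ := fun b => ht0eq ▸ hptwise t₀ ht₀s b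
      rw [hOpt, ← hfib t₀ ht₀s]
      exact haOptt₀
    · intro ha b
      have ha0 : a ∈ Opt U s₀ := hOpt ▸ ha
      apply Finset.sum_le_sum
      intro t ht
      have hat : a ∈ Opt U t := by rw [hfib t (Finset.mem_filter.mp ht).2]; exact ha0
      exact mul_le_mul_of_nonneg_left (hat b) (hP0 t)
  exact ⟨main, s₀, main⟩
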